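/- arXiv:1306.0409 — 3 statements merged into one kernel-verified Lean document; each statement's English description precedes it below -/
import Mathlib

section
/- Let α, β ≥ 0 and γ ∈ [0, π/4]. The function g(θ) = H_α((cos²θ, sin²θ)) + H_β((cos²(γ−θ), sin²(γ−θ))) is monotone nondecreasing on the interval [γ, π/4]; consequently, the minimum of g over [0, π/4] equals its minimum over [0, γ]. -/
open Real

/-- Power with the convention `0 ^ λ = 0` for all `λ ≥ 0`. -/
noncomputable def pw (p lam : ℝ) : ℝ := if p = 0 then 0 else p ^ lam

/-- Rényi entropy of the two-point probability vector `(p₁, p₂)`: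
`H_λ(p) = (1/(1-λ)) log (p₁^λ + p₂^λ)` for `λ ≠ 1`, Shannon entropy for `λ = 1`. -/
noncomputable def Hren (lam p1 p2 : ℝ) : ℝ :=
  if lam = 1 then -(p1 * Real.log p1 + p2 * Real.log p2)
  else (1 - lam)⁻¹ * Real.log (pw p1 lam + pw p2 lam)

/-- `g(θ) = H_α((cos²θ, sin²θ)) + H_β((cos²(γ−θ), sin²(γ−θ)))`. -/
noncomputable def gfun (α β γ θ : ℝ) : ℝ :=
  Hren α (Real.cos θ ^ 2) (Real.sin θ ^ 2) +
    Hren β (Real.cos (γ - θ) ^ 2) (Real.sin (γ - θ) ^ 2)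

lemma pw_eq_rpow (p lam : ℝ) (hlam : lam ≠ 0) : pw p lam = p ^ lam := by
  unfold pw
  split_ifs with h
  · rw [h, Real.zero_rpow hlam]
  · rfl

/-- The auxiliary function `φ(t) = (1-t)^λ + t^λ`. -/
noncomputable def phi (lam t : ℝ) : ℝ := (1 - t) ^ lam + t ^ lam

lemma phi_continuousOn (lam : ℝ) (hlam : 0 ≤ lam) :
    ContinuousOn (phi lam) (Set.Icc 0 (1/2 : ℝ)) := by
  apply ContinuousOn.add
  · exact fun x _ => ((Real.continuousAt_rpow_const (1 - x) lam
      (Or.inr hlam)).comp ((continuous_const.sub continuous_id).continuousAt)).continuousWithinAt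
  · exact fun x _ => (Real.continuousAt_rpow_const x lam (Or.inr hlam)).continuousWithinAt

lemma phi_hasDeriv (lam t : ℝ) (ht : 0 < t) (ht2 : t < 1/2) :
    HasDerivAt (phi lam) (lam * (1 - t) ^ (lam - 1) * (-1) + lam * t ^ (lam - 1)) t := by
  have h1t : (0:ℝ) < 1 - t := by linarith
  have hd1 : HasDerivAt (fun p : ℝ => 1 - p) (-1) t := by
    simpa using (hasDerivAt_id t).const_sub 1
  have h1 : HasDerivAt (fun p : ℝ => (1 - p) ^ lam) (lam * (1 - t) ^ (lam - 1) * (-1)) t :=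
    (Real.hasDerivAt_rpow_const (p := lam) (Or.inl h1t.ne')).comp t hd1
  have h2 : HasDerivAt (fun p : ℝ => p ^ lam) (lam * t ^ (lam - 1)) t :=
    Real.hasDerivAt_rpow_const (Or.inl ht.ne')
  exact h1.add h2

lemma phi_diff (lam : ℝ) :
    DifferentiableOn ℝ (phi lam) (interior (Set.Icc 0 (1/2 : ℝ))) := by
  rw [interior_Icc]
  intro t ht
  exact ((phi_hasDeriv lam t ht.1 ht.2).differentiableAt).differentiableWithinAt

lemma phi_monotoneOn (lam : ℝ) (hlam : 0 ≤ lam) (hlam1 : lam ≤ 1) :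
    MonotoneOn (phi lam) (Set.Icc 0 (1/2 : ℝ)) := by
  apply monotoneOn_of_deriv_nonneg (convex_Icc _ _) (phi_continuousOn lam hlam) (phi_diff lam)
  rw [interior_Icc]
  intro t ht
  rw [(phi_hasDeriv lam t ht.1 ht.2).deriv]
  have h1 : (1 - t) ^ (lam - 1) ≤ t ^ (lam - 1) :=
    Real.rpow_le_rpow_of_nonpos ht.1 (by linarith [ht.2]) (by linarith)
  nlinarith [mul_le_mul_of_nonneg_left h1 hlam]

lemma phi_antitoneOn (lam : ℝ) (hlam : 1 ≤ lam) :
    AntitoneOn (phi lam) (Set.Icc 0 (1/2 : ℝ)) := by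
  apply antitoneOn_of_deriv_nonpos (convex_Icc _ _)
    (phi_continuousOn lam (by linarith)) (phi_diff lam)
  rw [interior_Icc]
  intro t ht
  rw [(phi_hasDeriv lam t ht.1 ht.2).deriv]
  have h1 : t ^ (lam - 1) ≤ (1 - t) ^ (lam - 1) :=
    Real.rpow_le_rpow ht.1.le (by linarith [ht.2]) (by linarith)
  nlinarith [mul_le_mul_of_nonneg_left h1 (by linarith : (0:ℝ) ≤ lam)]

lemma phi_pos (lam t : ℝ) (ht : 0 ≤ t) (ht2 : t ≤ 1/2) : 0 < phi lam t := by
  have h1 : (0:ℝ) < (1 - t) ^ lam := Real.rpow_pos_of_pos (by linarith) _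
  have h2 : (0:ℝ) ≤ t ^ lam := Real.rpow_nonneg ht _
  unfold phi; linarith

lemma hren_eq_binEntropy (p : ℝ) : Hren 1 (1 - p) p = Real.binEntropy p := by
  unfold Hren Real.binEntropy
  rw [if_pos rfl, Real.log_inv, Real.log_inv]
  ring

/-- `F(p) = Hren λ (1-p) p` is monotone nondecreasing on `[0, 1/2]`. -/
lemma hren_monotoneOn (lam : ℝ) (hlam : 0 ≤ lam) :
    MonotoneOn (fun p : ℝ => Hren lam (1 - p) p) (Set.Icc 0 (1/2 : ℝ)) := by
  rcases eq_or_ne lam 1 with rfl | hl1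
  · have : ∀ p : ℝ, Hren 1 (1 - p) p = Real.binEntropy p := hren_eq_binEntropy
    simp only [this]
    have h := Real.binEntropy_strictMonoOn.monotoneOn
    rwa [show (2:ℝ)⁻¹ = 1/2 by norm_num] at h
  rcases eq_or_ne lam 0 with rfl | hl0
  · intro p hp q hq hpq
    simp only [Hren, if_neg hl1]
    have hp1 : (1:ℝ) - p ≠ 0 := by have := hp.2; intro h; norm_num at h; linarith
    have hq1 : (1:ℝ) - q ≠ 0 := by have := hq.2; intro h; norm_num at h; linarith
    unfold pw
    rw [if_neg hp1, if_neg hq1, Real.rpow_zero, Real.rpow_zero]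
    rcases eq_or_ne p 0 with rfl | hp0
    · rw [if_pos rfl]
      split_ifs with hq0
      · norm_num
      · rw [Real.rpow_zero]
        have hlog2 : (0:ℝ) ≤ Real.log 2 := Real.log_nonneg (by norm_num)
        norm_num
        linarith
    · have hq0 : q ≠ 0 := fun h => hp0 (le_antisymm (h ▸ hpq) hp.1)
      rw [if_neg hp0, if_neg hq0, Real.rpow_zero, Real.rpow_zero]
  · -- 0 < lam, lam ≠ 1
    have key : ∀ p : ℝ, Hren lam (1 - p) p = (1 - lam)⁻¹ * Real.log (phi lam p) := by
      intro p
      unfold Hren phi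
      rw [if_neg hl1, pw_eq_rpow _ _ hl0, pw_eq_rpow _ _ hl0]
    simp only [key]
    intro p hp q hq hpq
    rcases lt_or_gt_of_ne hl1 with h | h
    · have hmono := phi_monotoneOn lam hlam h.le hp hq hpq
      have hlog := Real.log_le_log (phi_pos lam p hp.1 hp.2) hmono
      have hpos : (0:ℝ) < (1 - lam)⁻¹ := inv_pos.mpr (by linarith)
      nlinarith
    · have hmono := phi_antitoneOn lam h.le hp hq hpq
      have hlog := Real.log_le_log (phi_pos lam q hq.1 hq.2) hmono
      have hneg : (1 - lam)⁻¹ < 0 := inv_lt_zero.mpr (by linarith)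
      nlinarith

/-- Nonnegativity of the binary Rényi entropy. -/
lemma hren_nonneg (lam : ℝ) (hlam : 0 ≤ lam) (p : ℝ) (hp0 : 0 ≤ p) (hp1 : p ≤ 1) :
    0 ≤ Hren lam (1 - p) p := by
  rcases eq_or_ne lam 1 with rfl | hl1
  · rw [hren_eq_binEntropy]
    exact Real.binEntropy_nonneg hp0 hp1
  have hpw1 : 0 ≤ pw (1 - p) lam := by
    unfold pw; split_ifs
    · exact le_rfl
    · exact Real.rpow_nonneg (by linarith) _
  have hpw2 : 0 ≤ pw p lam := by
    unfold pw; split_ifs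
    · exact le_rfl
    · exact Real.rpow_nonneg hp0 _
  have hsum0 : 0 ≤ pw (1 - p) lam + pw p lam := by linarith
  rcases le_or_gt lam 1 with h | h
  · -- sum ≥ 1
    have h1 : (1 - p) ≤ pw (1 - p) lam := by
      unfold pw
      split_ifs with hz
      · linarith [hz]
      · calc (1 - p) = (1 - p) ^ (1:ℝ) := (Real.rpow_one _).symm
          _ ≤ (1 - p) ^ lam := Real.rpow_le_rpow_of_exponent_ge'
              (by linarith) (by linarith) hlam h
    have h2 : p ≤ pw p lam := by
      unfold pw
      split_ifs with hz
      · linarith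
      · calc p = p ^ (1:ℝ) := (Real.rpow_one _).symm
          _ ≤ p ^ lam := Real.rpow_le_rpow_of_exponent_ge' hp0 hp1 hlam h
    have hsum : 1 ≤ pw (1 - p) lam + pw p lam := by linarith
    unfold Hren
    rw [if_neg hl1]
    have hlog : (0:ℝ) ≤ Real.log (pw (1 - p) lam + pw p lam) := Real.log_nonneg hsum
    have hinv : (0:ℝ) ≤ (1 - lam)⁻¹ := inv_nonneg.mpr (by linarith)
    exact mul_nonneg hinv hlog
  · -- lam > 1 : sum ≤ 1
    have h1 : pw (1 - p) lam ≤ 1 - p := by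
      unfold pw
      split_ifs with hz
      · linarith
      · calc (1 - p) ^ lam ≤ (1 - p) ^ (1:ℝ) := Real.rpow_le_rpow_of_exponent_ge'
              (by linarith) (by linarith) zero_le_one h.le
          _ = 1 - p := Real.rpow_one _
    have h2 : pw p lam ≤ p := by
      unfold pw
      split_ifs with hz
      · linarith
      · calc p ^ lam ≤ p ^ (1:ℝ) := Real.rpow_le_rpow_of_exponent_ge'
              hp0 hp1 zero_le_one h.le
          _ = p := Real.rpow_one _
    have hsum : pw (1 - p) lam + pw p lam ≤ 1 := by linarith
    unfold Hren
    rw [if_neg hl1]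
    have hlog : Real.log (pw (1 - p) lam + pw p lam) ≤ 0 := Real.log_nonpos hsum0 hsum
    have hneg : (1 - lam)⁻¹ ≤ 0 := inv_nonpos.mpr (by linarith)
    nlinarith

lemma sin_sq_monotoneOn : MonotoneOn (fun θ : ℝ => Real.sin θ ^ 2)
    (Set.Icc 0 (Real.pi / 4)) := by
  intro a ha b hb hab
  have hpi := Real.pi_pos
  have hsa : 0 ≤ Real.sin a := Real.sin_nonneg_of_nonneg_of_le_pi ha.1 (by linarith [ha.2])
  have hs : Real.sin a ≤ Real.sin b := by
    apply Real.strictMonoOn_sin.monotoneOn ⟨by linarith [ha.1], by linarith [ha.2]⟩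
      ⟨by linarith [hb.1], by linarith [hb.2]⟩ hab
  exact pow_le_pow_left₀ hsa hs 2

lemma sin_sq_mapsTo : Set.MapsTo (fun θ : ℝ => Real.sin θ ^ 2)
    (Set.Icc 0 (Real.pi / 4)) (Set.Icc 0 (1/2 : ℝ)) := by
  intro θ hθ
  have hpi := Real.pi_pos
  have hs0 : 0 ≤ Real.sin θ := Real.sin_nonneg_of_nonneg_of_le_pi hθ.1 (by linarith [hθ.2])
  have hs : Real.sin θ ≤ Real.sin (Real.pi / 4) := by
    apply Real.strictMonoOn_sin.monotoneOn ⟨by linarith [hθ.1], by linarith [hθ.2]⟩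
      ⟨by linarith, by linarith⟩ hθ.2
  have hsq : Real.sin θ ^ 2 ≤ Real.sin (Real.pi / 4) ^ 2 := pow_le_pow_left₀ hs0 hs 2
  have : Real.sin (Real.pi / 4) ^ 2 = 1/2 := by
    rw [Real.sin_pi_div_four]
    rw [div_pow, Real.sq_sqrt (by norm_num : (2:ℝ) ≥ 0)]
    norm_num
  exact ⟨sq_nonneg _, by linarith [hsq, this.le, this ▸ hsq]⟩

/-- `θ ↦ H_λ(cos²θ, sin²θ)` is monotone on `[0, π/4]`. -/
lemma htheta_monotoneOn (lam : ℝ) (hlam : 0 ≤ lam) :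
    MonotoneOn (fun θ : ℝ => Hren lam (Real.cos θ ^ 2) (Real.sin θ ^ 2))
      (Set.Icc 0 (Real.pi / 4)) := by
  have heq : ∀ θ : ℝ, Hren lam (Real.cos θ ^ 2) (Real.sin θ ^ 2)
      = Hren lam (1 - Real.sin θ ^ 2) (Real.sin θ ^ 2) := by
    intro θ; rw [Real.cos_sq']
  simp only [heq]
  intro a ha b hb hab
  exact hren_monotoneOn lam hlam (sin_sq_mapsTo ha) (sin_sq_mapsTo hb)
    (sin_sq_monotoneOn ha hb hab)

lemma gfun_monotoneOn (α β : ℝ) (hα : 0 ≤ α) (hβ : 0 ≤ β)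
    (γ : ℝ) (hγ : γ ∈ Set.Icc 0 (Real.pi / 4)) :
    MonotoneOn (fun θ : ℝ => gfun α β γ θ) (Set.Icc γ (Real.pi / 4)) := by
  have heq : ∀ θ : ℝ, gfun α β γ θ =
      Hren α (Real.cos θ ^ 2) (Real.sin θ ^ 2) +
      Hren β (Real.cos (θ - γ) ^ 2) (Real.sin (θ - γ) ^ 2) := by
    intro θ
    unfold gfun
    rw [show γ - θ = -(θ - γ) by ring, Real.cos_neg, Real.sin_neg, neg_sq]
  simp only [heq]
  apply MonotoneOn.add
  · exact (htheta_monotoneOn α hα).mono (Set.Icc_subset_Icc hγ.1 le_rfl)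
  · intro a ha b hb hab
    have hmem : ∀ x : ℝ, x ∈ Set.Icc γ (Real.pi / 4) →
        x - γ ∈ Set.Icc 0 (Real.pi / 4) := fun x hx =>
      ⟨by linarith [hx.1], by linarith [hx.2, hγ.1]⟩
    exact htheta_monotoneOn β hβ (hmem a ha) (hmem b hb) (by linarith)

lemma gfun_nonneg (α β : ℝ) (hα : 0 ≤ α) (hβ : 0 ≤ β) (γ θ : ℝ) :
    0 ≤ gfun α β γ θ := by
  unfold gfun
  have h1 : Hren α (Real.cos θ ^ 2) (Real.sin θ ^ 2) =
      Hren α (1 - Real.sin θ ^ 2) (Real.sin θ ^ 2) := by rw [Real.cos_sq']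
  have h2 : Hren β (Real.cos (γ - θ) ^ 2) (Real.sin (γ - θ) ^ 2) =
      Hren β (1 - Real.sin (γ - θ) ^ 2) (Real.sin (γ - θ) ^ 2) := by rw [Real.cos_sq']
  rw [h1, h2]
  have := hren_nonneg α hα (Real.sin θ ^ 2) (sq_nonneg _) (Real.sin_sq_le_one θ)
  have := hren_nonneg β hβ (Real.sin (γ - θ) ^ 2) (sq_nonneg _) (Real.sin_sq_le_one (γ - θ))
  linarith

/-- the entropies sum is nondecreasing on `[γ, π/4]`, so its minimum
over `[0, π/4]` equals its minimum over `[0, γ]`. -/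
theorem stmt_11 (α β : ℝ) (hα : 0 ≤ α) (hβ : 0 ≤ β)
    (γ : ℝ) (hγ : γ ∈ Set.Icc 0 (Real.pi / 4)) :
    MonotoneOn (fun θ : ℝ => gfun α β γ θ) (Set.Icc γ (Real.pi / 4)) ∧
    sInf ((fun θ : ℝ => gfun α β γ θ) '' Set.Icc 0 (Real.pi / 4)) =
      sInf ((fun θ : ℝ => gfun α β γ θ) '' Set.Icc 0 γ) := by
  have hmono := gfun_monotoneOn α β hα hβ γ hγ
  refine ⟨hmono, ?_⟩
  set f : ℝ → ℝ := fun θ => gfun α β γ θ with hf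
  have hAneB : (f '' Set.Icc 0 γ).Nonempty :=
    ⟨f γ, ⟨γ, ⟨hγ.1, le_rfl⟩, rfl⟩⟩
  have hsub : f '' Set.Icc 0 γ ⊆ f '' Set.Icc 0 (Real.pi / 4) :=
    Set.image_mono (Set.Icc_subset_Icc le_rfl hγ.2)
  have hBdd : BddBelow (f '' Set.Icc 0 (Real.pi / 4)) := by
    refine ⟨0, ?_⟩
    rintro y ⟨θ, _, rfl⟩
    exact gfun_nonneg α β hα hβ γ θ
  have hBddA : BddBelow (f '' Set.Icc 0 γ) := hBdd.mono hsub
  apply le_antisymm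
  · exact csInf_le_csInf hBdd hAneB hsub
  · have hBne : (f '' Set.Icc 0 (Real.pi / 4)).Nonempty := ⟨f γ, γ, ⟨hγ.1, hγ.2⟩, rfl⟩
    apply le_csInf hBne
    rintro y ⟨θ, hθ, rfl⟩
    rcases le_or_gt θ γ with h | h
    · exact csInf_le hBddA ⟨θ, ⟨hθ.1, h⟩, rfl⟩
    · have h1 : f γ ≤ f θ := hmono ⟨le_rfl, hγ.2⟩ ⟨h.le, hθ.2⟩ h.le
      have h2 : sInf (f '' Set.Icc 0 γ) ≤ f γ := csInf_le hBddA ⟨γ, ⟨hγ.1, le_rfl⟩, rfl⟩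
      linarith
end

section
/- For every λ ∈ (0, 1/2], the function θ ↦ H_λ((cos²θ, sin²θ)) = (1/(1−λ))·log( (cos²θ)^λ + (sin²θ)^λ ) is concave on [0, π/4], and its second derivative is strictly negative on (0, π/4). Consequently, for α, β ∈ (0, 1/2] and γ ∈ [0, π/4], the function θ ↦ H_α((cos²θ, sin²θ)) + H_β((cos²(γ−θ), sin²(γ−θ))) is concave on [0, γ] and attains its minimum over [0, γ] at an endpoint. -/
open Real Set

-- key algebraic inequality
lemma key_ineq (p q a b lam : ℝ) (hp : 0 < p) (hq : 0 < q) (ha : 0 < a) (hb : 0 < b)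
    (hl : 0 < lam) (hl2 : lam ≤ 1/2) :
    (2*lam*(q - p)*(a/p - b/q) + 4*lam*(lam-1)*(p*q)*(a/p/p + b/q/q)) * (a+b)
      - (2*lam)^2*(p*q)*(a/p - b/q)^2 < 0 := by
  have hM : 0 < 4*lam*(a*q-b*p)^2 + (2-4*lam)*(a*q^2+b*p^2)*(a+b) + 2*(p*q)*(a+b)^2 := by
    have h1 : 0 ≤ 4*lam*(a*q-b*p)^2 := by positivity
    have h2 : 0 ≤ (2-4*lam)*(a*q^2+b*p^2)*(a+b) := by
      have : 0 ≤ 2-4*lam := by linarith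
      positivity
    have h3 : 0 < 2*(p*q)*(a+b)^2 := by positivity
    linarith
  have hX : (2*lam*(q - p)*(a/p - b/q) + 4*lam*(lam-1)*(p*q)*(a/p/p + b/q/q)) * (a+b)
      - (2*lam)^2*(p*q)*(a/p - b/q)^2
      = -(lam * (4*lam*(a*q-b*p)^2 + (2-4*lam)*(a*q^2+b*p^2)*(a+b) + 2*(p*q)*(a+b)^2) / (p*q)) := by
    field_simp
    ring
  rw [hX]
  have : 0 < lam * (4*lam*(a*q-b*p)^2 + (2-4*lam)*(a*q^2+b*p^2)*(a+b) + 2*(p*q)*(a+b)^2) / (p*q) :=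
    div_pos (mul_pos hl hM) (mul_pos hp hq)
  linarith


lemma pw_eq {lam : ℝ} (hl : lam ≠ 0) (p : ℝ) : pw p lam = p ^ lam := by
  unfold pw; split_ifs with h
  · rw [h, Real.zero_rpow hl]
  · rfl

section
variable {lam : ℝ}

lemma hren_eq (hl0 : lam ≠ 0) (hl1 : lam ≠ 1) :
    (fun θ : ℝ => Hren lam (Real.cos θ ^ 2) (Real.sin θ ^ 2)) =
      fun θ : ℝ => (1-lam)⁻¹ * Real.log ((Real.cos θ ^ 2) ^ lam + (Real.sin θ ^ 2) ^ lam) := by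
  funext θ
  unfold Hren
  rw [if_neg hl1, pw_eq hl0, pw_eq hl0]

-- derivative of A
lemma hasDerivAt_A (θ : ℝ) (hθ : θ ∈ Ioo 0 (π/2)) :
    HasDerivAt (fun θ : ℝ => (Real.cos θ ^ 2) ^ lam + (Real.sin θ ^ 2) ^ lam)
      (2*lam*Real.sin θ*Real.cos θ*((Real.sin θ ^ 2) ^ (lam-1) - (Real.cos θ ^ 2) ^ (lam-1))) θ := by
  have hs : Real.sin θ ≠ 0 := ne_of_gt (Real.sin_pos_of_pos_of_lt_pi hθ.1 (by linarith [hθ.2, Real.pi_pos]))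
  have hc : Real.cos θ ≠ 0 := ne_of_gt (Real.cos_pos_of_mem_Ioo ⟨by linarith [hθ.1, Real.pi_pos], hθ.2⟩)
  have h1 : HasDerivAt (fun θ : ℝ => Real.cos θ ^ 2) (2 * Real.cos θ ^ 1 * (-Real.sin θ)) θ := by
    simpa using (Real.hasDerivAt_cos θ).fun_pow 2
  have h2 : HasDerivAt (fun θ : ℝ => Real.sin θ ^ 2) (2 * Real.sin θ ^ 1 * Real.cos θ) θ := by
    simpa using (Real.hasDerivAt_sin θ).fun_pow 2
  have h3 := h1.rpow_const (p := lam) (Or.inl (pow_ne_zero 2 hc))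
  have h4 := h2.rpow_const (p := lam) (Or.inl (pow_ne_zero 2 hs))
  refine (h3.fun_add h4).congr_deriv ?_
  ring

end

section
variable {lam : ℝ}

lemma hasDerivAt_A1 (θ : ℝ) (hθ : θ ∈ Ioo 0 (π/2)) :
    HasDerivAt (fun θ : ℝ => 2*lam*Real.sin θ*Real.cos θ*((Real.sin θ ^ 2) ^ (lam-1) - (Real.cos θ ^ 2) ^ (lam-1)))
      (2*lam*(Real.cos θ ^ 2 - Real.sin θ ^ 2)*((Real.sin θ ^ 2) ^ (lam-1) - (Real.cos θ ^ 2) ^ (lam-1))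
        + 4*lam*(lam-1)*(Real.sin θ ^ 2 * Real.cos θ ^ 2)
            *((Real.sin θ ^ 2) ^ (lam-1-1) + (Real.cos θ ^ 2) ^ (lam-1-1))) θ := by
  have hs : Real.sin θ ≠ 0 := ne_of_gt (Real.sin_pos_of_pos_of_lt_pi hθ.1 (by linarith [hθ.2, Real.pi_pos]))
  have hc : Real.cos θ ≠ 0 := ne_of_gt (Real.cos_pos_of_mem_Ioo ⟨by linarith [hθ.1, Real.pi_pos], hθ.2⟩)
  have h1 : HasDerivAt (fun θ : ℝ => Real.cos θ ^ 2) (2 * Real.cos θ ^ 1 * (-Real.sin θ)) θ := by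
    simpa using (Real.hasDerivAt_cos θ).fun_pow 2
  have h2 : HasDerivAt (fun θ : ℝ => Real.sin θ ^ 2) (2 * Real.sin θ ^ 1 * Real.cos θ) θ := by
    simpa using (Real.hasDerivAt_sin θ).fun_pow 2
  have h3 := h1.rpow_const (p := lam - 1) (Or.inl (pow_ne_zero 2 hc))
  have h4 := h2.rpow_const (p := lam - 1) (Or.inl (pow_ne_zero 2 hs))
  have hu := ((Real.hasDerivAt_sin θ).const_mul (2*lam)).fun_mul (Real.hasDerivAt_cos θ)
  have := hu.fun_mul (h4.fun_sub h3)
  refine this.congr_deriv ?_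
  ring
end

section
variable {lam : ℝ}

lemma A_pos (θ : ℝ) (hθ : θ ∈ Ioo 0 (π/2)) :
    0 < (Real.cos θ ^ 2) ^ lam + (Real.sin θ ^ 2) ^ lam := by
  have hs : 0 < Real.sin θ := Real.sin_pos_of_pos_of_lt_pi hθ.1 (by linarith [hθ.2, Real.pi_pos])
  have hc : 0 < Real.cos θ := Real.cos_pos_of_mem_Ioo ⟨by linarith [hθ.1, Real.pi_pos], hθ.2⟩
  have := Real.rpow_pos_of_pos (pow_pos hc 2) lam
  have := Real.rpow_pos_of_pos (pow_pos hs 2) lam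
  linarith

lemma deriv2_neg (hl : lam ∈ Ioc (0:ℝ) (1/2)) (θ : ℝ) (hθ : θ ∈ Ioo 0 (π/4)) :
    deriv (deriv (fun θ : ℝ => Hren lam (Real.cos θ ^ 2) (Real.sin θ ^ 2))) θ < 0 := by
  have hl0 : lam ≠ 0 := ne_of_gt hl.1
  have hl1 : lam ≠ 1 := by intro h; rw [h] at hl; norm_num at hl
  have hcpos : 0 < (1-lam)⁻¹ := by
    have := hl.2
    have h1 : (0:ℝ) < 1 - lam := by linarith
    positivity
  have hθ' : θ ∈ Ioo 0 (π/2) := ⟨hθ.1, by linarith [hθ.2, Real.pi_pos]⟩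
  have hs : 0 < Real.sin θ := Real.sin_pos_of_pos_of_lt_pi hθ'.1 (by linarith [hθ'.2, Real.pi_pos])
  have hc : 0 < Real.cos θ := Real.cos_pos_of_mem_Ioo ⟨by linarith [hθ'.1, Real.pi_pos], hθ'.2⟩
  rw [hren_eq hl0 hl1]
  have hOpen : Ioo (0:ℝ) (π/2) ∈ nhds θ := isOpen_Ioo.mem_nhds hθ'
  have hderiv1 : ∀ x ∈ Ioo (0:ℝ) (π/2),
      HasDerivAt (fun θ : ℝ => (1-lam)⁻¹ * Real.log ((Real.cos θ ^ 2) ^ lam + (Real.sin θ ^ 2) ^ lam))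
        ((1-lam)⁻¹ * ((2*lam*Real.sin x*Real.cos x*((Real.sin x ^ 2) ^ (lam-1) - (Real.cos x ^ 2) ^ (lam-1)))
          / ((Real.cos x ^ 2) ^ lam + (Real.sin x ^ 2) ^ lam))) x := fun x hx =>
    (((hasDerivAt_A (lam := lam) x hx).log (A_pos x hx).ne')).const_mul _
  have hEq : deriv (fun θ : ℝ => (1-lam)⁻¹ * Real.log ((Real.cos θ ^ 2) ^ lam + (Real.sin θ ^ 2) ^ lam))
      =ᶠ[nhds θ] (fun x : ℝ => (1-lam)⁻¹ * ((2*lam*Real.sin x*Real.cos x*((Real.sin x ^ 2) ^ (lam-1) - (Real.cos x ^ 2) ^ (lam-1)))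
          / ((Real.cos x ^ 2) ^ lam + (Real.sin x ^ 2) ^ lam))) :=
    Filter.eventuallyEq_of_mem hOpen (fun x hx => (hderiv1 x hx).deriv)
  rw [hEq.deriv_eq]
  have hd2 := (((hasDerivAt_A1 (lam := lam) θ hθ').fun_div (hasDerivAt_A (lam := lam) θ hθ')
      (A_pos θ hθ').ne')).const_mul ((1-lam)⁻¹)
  rw [hd2.deriv]
  apply mul_neg_of_pos_of_neg hcpos
  apply div_neg_of_neg_of_pos _ (pow_pos (A_pos θ hθ') 2)
  have hp : 0 < Real.sin θ ^ 2 := pow_pos hs 2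
  have hq : 0 < Real.cos θ ^ 2 := pow_pos hc 2
  have key := key_ineq (Real.sin θ ^ 2) (Real.cos θ ^ 2) ((Real.sin θ ^ 2) ^ lam) ((Real.cos θ ^ 2) ^ lam)
      lam hp hq (Real.rpow_pos_of_pos hp lam) (Real.rpow_pos_of_pos hq lam) hl.1 hl.2
  refine lt_of_eq_of_lt ?_ key
  rw [Real.rpow_sub_one hp.ne' (lam-1), Real.rpow_sub_one hq.ne' (lam-1),
    Real.rpow_sub_one hp.ne' lam, Real.rpow_sub_one hq.ne' lam]
  ring
end

section
variable {lam : ℝ}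

lemma renyi_cont (hl : lam ∈ Ioc (0:ℝ) (1/2)) :
    ContinuousOn (fun θ : ℝ => Hren lam (Real.cos θ ^ 2) (Real.sin θ ^ 2)) (Icc 0 (π/4)) := by
  have hl0 : lam ≠ 0 := ne_of_gt hl.1
  have hl1 : lam ≠ 1 := by intro h; rw [h] at hl; norm_num at hl
  rw [hren_eq hl0 hl1]
  apply ContinuousOn.mul continuousOn_const
  apply ContinuousOn.log
  · exact ((((continuous_cos.pow 2).rpow_const (fun x => Or.inr hl.1.le)).add
      ((continuous_sin.pow 2).rpow_const (fun x => Or.inr hl.1.le)))).continuousOn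
  · intro x hx
    have hc : 0 < Real.cos x := by
      apply Real.cos_pos_of_mem_Ioo
      constructor
      · linarith [hx.1, Real.pi_pos]
      · linarith [hx.2, Real.pi_pos]
    have h1 := Real.rpow_pos_of_pos (pow_pos hc 2) lam
    have h2 : 0 ≤ (Real.sin x ^ 2) ^ lam := Real.rpow_nonneg (sq_nonneg _) lam
    positivity

lemma renyi_concaveOn (hl : lam ∈ Ioc (0:ℝ) (1/2)) :
    ConcaveOn ℝ (Icc 0 (π/4)) (fun θ : ℝ => Hren lam (Real.cos θ ^ 2) (Real.sin θ ^ 2)) := by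
  refine (strictConcaveOn_of_deriv2_neg (convex_Icc _ _) (renyi_cont hl) fun x hx => ?_).concaveOn
  rw [interior_Icc] at hx
  simpa [Function.iterate_succ, Function.comp] using deriv2_neg hl x hx

end


lemma gfun_concave {α β γ : ℝ} (hα : α ∈ Ioc (0:ℝ) (1/2)) (hβ : β ∈ Ioc (0:ℝ) (1/2))
    (hγ : γ ∈ Icc (0:ℝ) (π/4)) :
    ConcaveOn ℝ (Icc 0 γ) (fun θ : ℝ => gfun α β γ θ) := by
  have h1 : ConcaveOn ℝ (Icc 0 γ) (fun θ : ℝ => Hren α (Real.cos θ ^ 2) (Real.sin θ ^ 2)) :=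
    (renyi_concaveOn hα).subset (Icc_subset_Icc_right hγ.2) (convex_Icc _ _)
  have h2 : ConcaveOn ℝ (Icc 0 γ)
      (fun θ : ℝ => Hren β (Real.cos (γ - θ) ^ 2) (Real.sin (γ - θ) ^ 2)) := by
    refine ⟨convex_Icc _ _, fun x hx y hy a b ha hb hab => ?_⟩
    have hβc := renyi_concaveOn hβ
    have hx' : γ - x ∈ Icc (0:ℝ) (π/4) := ⟨by linarith [hx.2], by linarith [hx.1, hγ.2]⟩
    have hy' : γ - y ∈ Icc (0:ℝ) (π/4) := ⟨by linarith [hy.2], by linarith [hy.1, hγ.2]⟩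
    have h := hβc.2 hx' hy' ha hb hab
    have harg : a • (γ - x) + b • (γ - y) = γ - (a • x + b • y) := by
      simp only [smul_eq_mul]
      linear_combination γ * hab
    rw [harg] at h
    simpa using h
  exact h1.add h2

lemma gfun_min {α β γ : ℝ} (hα : α ∈ Ioc (0:ℝ) (1/2)) (hβ : β ∈ Ioc (0:ℝ) (1/2))
    (hγ : γ ∈ Icc (0:ℝ) (π/4)) :
    IsMinOn (fun θ : ℝ => gfun α β γ θ) (Icc 0 γ) 0 ∨
      IsMinOn (fun θ : ℝ => gfun α β γ θ) (Icc 0 γ) γ := by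
  have hcc := gfun_concave hα hβ hγ
  have h0 : (0:ℝ) ∈ Icc (0:ℝ) γ := ⟨le_refl _, hγ.1⟩
  have hγm : γ ∈ Icc (0:ℝ) γ := ⟨hγ.1, le_refl _⟩
  have hseg : ∀ x ∈ Icc (0:ℝ) γ, x ∈ segment ℝ (0:ℝ) γ := by
    intro x hx
    rw [segment_eq_Icc hγ.1]
    exact hx
  by_cases h : gfun α β γ 0 ≤ gfun α β γ γ
  · left
    rw [isMinOn_iff]
    intro x hx
    have := hcc.ge_on_segment h0 hγm (hseg x hx)
    rw [min_eq_left h] at this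
    exact this
  · right
    rw [isMinOn_iff]
    intro x hx
    have := hcc.ge_on_segment h0 hγm (hseg x hx)
    rw [min_eq_right (le_of_not_ge h)] at this
    exact this

/-- concavity of `θ ↦ H_λ((cos²θ, sin²θ))` for `λ ∈ (0, 1/2]`, strict
negativity of its second derivative on `(0, π/4)`, and consequences: the entropies
sum is concave on `[0, γ]` and minimized at an endpoint. -/
theorem stmt_12 :
    (∀ lam : ℝ, lam ∈ Set.Ioc (0 : ℝ) (1 / 2) →
      ConcaveOn ℝ (Set.Icc 0 (Real.pi / 4))
        (fun θ : ℝ => Hren lam (Real.cos θ ^ 2) (Real.sin θ ^ 2)) ∧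
      ∀ θ ∈ Set.Ioo (0 : ℝ) (Real.pi / 4),
        deriv (deriv (fun θ : ℝ => Hren lam (Real.cos θ ^ 2) (Real.sin θ ^ 2))) θ < 0) ∧
    (∀ α β : ℝ, α ∈ Set.Ioc (0 : ℝ) (1 / 2) → β ∈ Set.Ioc (0 : ℝ) (1 / 2) →
      ∀ γ ∈ Set.Icc (0 : ℝ) (Real.pi / 4),
        ConcaveOn ℝ (Set.Icc 0 γ) (fun θ : ℝ => gfun α β γ θ) ∧
        (IsMinOn (fun θ : ℝ => gfun α β γ θ) (Set.Icc 0 γ) 0 ∨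
          IsMinOn (fun θ : ℝ => gfun α β γ θ) (Set.Icc 0 γ) γ)) := by
  refine ⟨fun lam hl => ⟨renyi_concaveOn hl, fun θ hθ => deriv2_neg hl θ hθ⟩,
    fun α β hα hβ γ hγ => ⟨gfun_concave hα hβ hγ, gfun_min hα hβ hγ⟩⟩
end

section
/- Let T be a 2×2 unitary matrix with overlap c = max_{k,l=1,2} |T_{lk}|. Then for every unit vector ψ ∈ ℂ² and all α, β ≥ 0, H_α(|ψ|²) + H_β(|Tψ|²) ≥ −2·log( (1 + c)/2 ) (the Deutsch-type bound). -/
open Real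

lemma pw_nonneg (p lam : ℝ) (hp : 0 ≤ p) : 0 ≤ pw p lam := by
  rw [pw]; split
  · exact le_rfl
  · exact Real.rpow_nonneg hp _

/-- Abstract two-vector uncertainty: for unit vectors `u,v,ψ`,
`|⟪u,ψ⟫|² + |⟪v,ψ⟫|² ≤ 1 + |⟪u,v⟫|`. -/
lemma keyA {E : Type*} [NormedAddCommGroup E] [InnerProductSpace ℂ E]
    (u v ψ : E) (c : ℝ) (hu : ‖u‖ = 1) (hv : ‖v‖ = 1) (hψ : ‖ψ‖ = 1)
    (huv : ‖(inner ℂ u v)‖ ≤ c) :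
    ‖(inner ℂ u ψ)‖ ^ 2 + ‖(inner ℂ v ψ)‖ ^ 2 ≤ 1 + c := by
  set p : ℂ := inner ℂ u ψ with hp
  set q : ℂ := inner ℂ v ψ with hq
  set S : ℝ := ‖p‖ ^ 2 + ‖q‖ ^ 2 with hSdef
  have hS0 : 0 ≤ S := by positivity
  have hc0 : 0 ≤ c := le_trans (norm_nonneg _) huv
  set z : E := p • u + q • v with hzdef
  have hz : (inner ℂ z ψ) = (S : ℂ) := by
    rw [hzdef, inner_add_left, inner_smul_left, inner_smul_left, ← hp, ← hq,
      RCLike.conj_mul, RCLike.conj_mul, hSdef]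
    norm_cast
  have h1 : S ≤ ‖z‖ := by
    have h := norm_inner_le_norm (𝕜 := ℂ) z ψ
    rw [hz, hψ, mul_one] at h
    rwa [Complex.norm_real, Real.norm_eq_abs, abs_of_nonneg hS0] at h
  have h2 : ‖z‖ ^ 2 ≤ S * (1 + c) := by
    have e1 := norm_add_sq (𝕜 := ℂ) (p • u) (q • v)
    rw [← hzdef] at e1
    have e2 : ‖p • u‖ = ‖p‖ := by simp [norm_smul, hu]
    have e3 : ‖q • v‖ = ‖q‖ := by simp [norm_smul, hv]
    have e4 : RCLike.re (inner ℂ (p • u) (q • v)) ≤ ‖p‖ * ‖q‖ * c := by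
      calc RCLike.re (inner ℂ (p • u) (q • v)) ≤ ‖(inner ℂ (p • u) (q • v))‖ :=
            RCLike.re_le_norm _
        _ = ‖p‖ * ‖q‖ * ‖(inner ℂ u v)‖ := by
            rw [inner_smul_left, inner_smul_right]
            simp [norm_mul, RCLike.norm_conj, mul_assoc]
        _ ≤ ‖p‖ * ‖q‖ * c := by
            apply mul_le_mul_of_nonneg_left huv (by positivity)
    have e5 : 2 * (‖p‖ * ‖q‖) ≤ S := by
      rw [hSdef]; nlinarith [sq_nonneg (‖p‖ - ‖q‖)]
    nlinarith [norm_nonneg p, norm_nonneg q]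
  nlinarith

/-- Concrete instantiation: for a 2×2 unitary `T` with entries bounded by `c`,
and unit `ψ`, `|ψ k|² + |(Tψ) l|² ≤ 1 + c`. -/
lemma keyB (T : Matrix (Fin 2) (Fin 2) ℂ) (hT : T ∈ Matrix.unitaryGroup (Fin 2) ℂ)
    (c : ℝ) (hub : ∀ k l : Fin 2, ‖T l k‖ ≤ c)
    (ψ : Fin 2 → ℂ) (hψ : ‖ψ 0‖ ^ 2 + ‖ψ 1‖ ^ 2 = 1)
    (k l : Fin 2) :
    ‖ψ k‖ ^ 2 + ‖T.mulVec ψ l‖ ^ 2 ≤ 1 + c := by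
  have hrow : ‖T l 0‖ ^ 2 + ‖T l 1‖ ^ 2 = 1 := by
    have h := congrFun (congrFun hT.2 l) l
    simp only [Matrix.mul_apply, Fin.sum_univ_two, Matrix.star_apply,
      Matrix.one_apply_eq] at h
    simp only [Complex.star_def] at h
    have h' : (↑(‖T l 0‖ ^ 2) + ↑(‖T l 1‖ ^ 2) : ℂ) = 1 := by
      rw [Complex.sq_norm, Complex.sq_norm, ← Complex.mul_conj, ← Complex.mul_conj]
      exact h
    exact_mod_cast h'
  set u : EuclideanSpace ℂ (Fin 2) := EuclideanSpace.single k (1 : ℂ) with hudef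
  set v : EuclideanSpace ℂ (Fin 2) :=
    (WithLp.equiv 2 (Fin 2 → ℂ)).symm (fun j => (starRingEnd ℂ) (T l j)) with hvdef
  set ψ' : EuclideanSpace ℂ (Fin 2) := (WithLp.equiv 2 (Fin 2 → ℂ)).symm ψ with hψdef
  have hu : ‖u‖ = 1 := by simp [hudef]
  have hv : ‖v‖ = 1 := by
    rw [EuclideanSpace.norm_eq, Fin.sum_univ_two]
    simp only [hvdef, WithLp.equiv_symm_apply, PiLp.toLp_apply]
    rw [Complex.norm_conj, Complex.norm_conj, hrow, Real.sqrt_one]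
  have hψ' : ‖ψ'‖ = 1 := by
    rw [EuclideanSpace.norm_eq, Fin.sum_univ_two]
    simp only [hψdef, WithLp.equiv_symm_apply, PiLp.toLp_apply]
    rw [hψ, Real.sqrt_one]
  have huψ : (inner ℂ u ψ') = ψ k := by
    rw [hudef, EuclideanSpace.inner_single_left]
    simp [hψdef]
  have hvψ : (inner ℂ v ψ') = T.mulVec ψ l := by
    rw [PiLp.inner_apply, Fin.sum_univ_two]
    simp only [hvdef, hψdef, WithLp.equiv_symm_apply, PiLp.toLp_apply, RCLike.inner_apply,
      RingHomCompTriple.comp_apply, Complex.conj_conj]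
    simp [Matrix.mulVec, dotProduct, Fin.sum_univ_two, Complex.conj_conj, mul_comm]
  have huv : ‖(inner ℂ u v)‖ ≤ c := by
    rw [hudef, EuclideanSpace.inner_single_left]
    simp only [map_one, one_mul, hvdef, WithLp.equiv_symm_apply, PiLp.toLp_apply]
    rw [Complex.norm_conj]
    exact hub k l
  have := keyA u v ψ' c hu hv hψ' huv
  rwa [huψ, hvψ] at this

/-- Rényi entropy is at least the min-entropy `-log (max p1 p2)`. -/
lemma Hren_ge (lam p1 p2 : ℝ) (hlam : 0 ≤ lam) (h1 : 0 ≤ p1) (h2 : 0 ≤ p2)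
    (hs : p1 + p2 = 1) : -Real.log (max p1 p2) ≤ Hren lam p1 p2 := by
  set m : ℝ := max p1 p2 with hm
  have hm0 : 0 < m := by
    rcases le_total p1 p2 with h | h
    · have : (1:ℝ)/2 ≤ p2 := by linarith
      exact lt_of_lt_of_le (by norm_num) (le_trans this (le_max_right _ _))
    · have : (1:ℝ)/2 ≤ p1 := by linarith
      exact lt_of_lt_of_le (by norm_num) (le_trans this (le_max_left _ _))
  have hp1m : p1 ≤ m := le_max_left _ _
  have hp2m : p2 ≤ m := le_max_right _ _
  by_cases hl1 : lam = 1
  · rw [Hren, if_pos hl1]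
    have b1 : p1 * Real.log p1 ≤ p1 * Real.log m := by
      rcases eq_or_lt_of_le h1 with h | h
      · simp [← h]
      · exact mul_le_mul_of_nonneg_left (Real.log_le_log h hp1m) h1
    have b2 : p2 * Real.log p2 ≤ p2 * Real.log m := by
      rcases eq_or_lt_of_le h2 with h | h
      · simp [← h]
      · exact mul_le_mul_of_nonneg_left (Real.log_le_log h hp2m) h2
    have : p1 * Real.log p1 + p2 * Real.log p2 ≤ Real.log m := by
      have := add_le_add b1 b2
      calc p1 * Real.log p1 + p2 * Real.log p2 ≤ (p1 + p2) * Real.log m := by linarith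
        _ = Real.log m := by rw [hs, one_mul]
    linarith
  · rw [Hren, if_neg hl1]
    set S : ℝ := pw p1 lam + pw p2 lam with hSdef
    rcases lt_or_gt_of_ne hl1 with hlt | hgt
    · -- lam < 1
    -- S ≥ m ^ (lam - 1)
      have hb : ∀ p : ℝ, 0 ≤ p → p ≤ m → p * m ^ (lam - 1) ≤ pw p lam := by
        intro p hp hpm
        rcases eq_or_lt_of_le hp with h | h
        · simp [pw, ← h]
        · rw [pw, if_neg (ne_of_gt h)]
          have : m ^ (lam - 1) ≤ p ^ (lam - 1) :=
            Real.rpow_le_rpow_of_nonpos h hpm (by linarith)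
          calc p * m ^ (lam - 1) ≤ p * p ^ (lam - 1) :=
                mul_le_mul_of_nonneg_left this (le_of_lt h)
            _ = p ^ lam := by
                rw [Real.rpow_sub h, Real.rpow_one, mul_comm,
                  div_mul_cancel₀ _ (ne_of_gt h)]
      have hSm : m ^ (lam - 1) ≤ S := by
        have := add_le_add (hb p1 h1 hp1m) (hb p2 h2 hp2m)
        calc m ^ (lam - 1) = (p1 + p2) * m ^ (lam - 1) := by rw [hs, one_mul]
          _ = p1 * m ^ (lam - 1) + p2 * m ^ (lam - 1) := by ring
          _ ≤ S := by rw [hSdef]; linarith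
      have hmpow : (0:ℝ) < m ^ (lam - 1) := Real.rpow_pos_of_pos hm0 _
      have hlog : (lam - 1) * Real.log m ≤ Real.log S := by
        rw [← Real.log_rpow hm0]
        exact Real.log_le_log hmpow hSm
      have hpos : (0:ℝ) < (1 - lam)⁻¹ := by
        apply inv_pos.mpr; linarith
      have := mul_le_mul_of_nonneg_left hlog (le_of_lt hpos)
      have hne : (1 - lam) ≠ 0 := sub_ne_zero.mpr fun h => hl1 h.symm
      calc -Real.log m = (1 - lam)⁻¹ * ((lam - 1) * Real.log m) := by
            rw [show lam - 1 = -(1 - lam) by ring, neg_mul, mul_neg, ← mul_assoc,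
              inv_mul_cancel₀ hne, one_mul]
        _ ≤ (1 - lam)⁻¹ * Real.log S := this
    · -- lam > 1
      have hb : ∀ p : ℝ, 0 ≤ p → p ≤ m → pw p lam ≤ p * m ^ (lam - 1) := by
        intro p hp hpm
        rcases eq_or_lt_of_le hp with h | h
        · simp [pw, ← h]
        · rw [pw, if_neg (ne_of_gt h)]
          have : p ^ (lam - 1) ≤ m ^ (lam - 1) :=
            Real.rpow_le_rpow hp hpm (by linarith)
          calc p ^ lam = p * p ^ (lam - 1) := by
                rw [Real.rpow_sub h, Real.rpow_one, mul_comm,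
                  div_mul_cancel₀ _ (ne_of_gt h)]
            _ ≤ p * m ^ (lam - 1) := mul_le_mul_of_nonneg_left this (le_of_lt h)
      have hSm : S ≤ m ^ (lam - 1) := by
        have := add_le_add (hb p1 h1 hp1m) (hb p2 h2 hp2m)
        calc S ≤ p1 * m ^ (lam - 1) + p2 * m ^ (lam - 1) := by rw [hSdef]; linarith
          _ = (p1 + p2) * m ^ (lam - 1) := by ring
          _ = m ^ (lam - 1) := by rw [hs, one_mul]
      have hS0 : 0 < S := by
        have hmem : pw m lam ≤ S := by
          rw [hSdef, hm]
          rcases max_cases p1 p2 with ⟨h, _⟩ | ⟨h, _⟩ <;> rw [h]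
          · have := pw_nonneg p2 lam h2
            linarith
          · have := pw_nonneg p1 lam h1
            linarith
        have : 0 < pw m lam := by
          rw [pw, if_neg (ne_of_gt hm0)]
          exact Real.rpow_pos_of_pos hm0 _
        linarith
      have hlog : Real.log S ≤ (lam - 1) * Real.log m := by
        rw [← Real.log_rpow hm0]
        exact Real.log_le_log hS0 hSm
      have hneg : (1 - lam)⁻¹ < 0 := by
        rw [inv_lt_zero]; linarith
      have := mul_le_mul_of_nonpos_left hlog (le_of_lt hneg)
      have hne : (1 - lam) ≠ 0 := sub_ne_zero.mpr fun h => hl1 h.symm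
      calc -Real.log m = (1 - lam)⁻¹ * ((lam - 1) * Real.log m) := by
            rw [show lam - 1 = -(1 - lam) by ring, neg_mul, mul_neg, ← mul_assoc,
              inv_mul_cancel₀ hne, one_mul]
        _ ≤ (1 - lam)⁻¹ * Real.log S := this

/-- the Deutsch-type bound `H_α + H_β ≥ −2 log((1+c)/2)`. -/
theorem stmt_13 (T : Matrix (Fin 2) (Fin 2) ℂ)
    (hT : T ∈ Matrix.unitaryGroup (Fin 2) ℂ)
    (c : ℝ)
    (hc : IsGreatest {x : ℝ | ∃ k l : Fin 2, x = ‖T l k‖} c)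
    (α β : ℝ) (hα : 0 ≤ α) (hβ : 0 ≤ β)
    (ψ : Fin 2 → ℂ)
    (hψ : ‖ψ 0‖ ^ 2 + ‖ψ 1‖ ^ 2 = 1) :
    -2 * Real.log ((1 + c) / 2) ≤
      Hren α (‖ψ 0‖ ^ 2) (‖ψ 1‖ ^ 2) +
        Hren β (‖T.mulVec ψ 0‖ ^ 2) (‖T.mulVec ψ 1‖ ^ 2) := by
  have hub : ∀ k l : Fin 2, ‖T l k‖ ≤ c := fun k l => hc.2 ⟨k, l, rfl⟩
  have hc0 : 0 ≤ c := le_trans (norm_nonneg _) (hub 0 0)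
  set p1 : ℝ := ‖ψ 0‖ ^ 2 with hp1
  set p2 : ℝ := ‖ψ 1‖ ^ 2 with hp2
  set q1 : ℝ := ‖T.mulVec ψ 0‖ ^ 2 with hq1
  set q2 : ℝ := ‖T.mulVec ψ 1‖ ^ 2 with hq2
  -- q1 + q2 = 1 by unitarity
  have hq : q1 + q2 = 1 := by
    have e00 := congrFun (congrFun hT.1 0) 0
    have e01 := congrFun (congrFun hT.1 0) 1
    have e10 := congrFun (congrFun hT.1 1) 0
    have e11 := congrFun (congrFun hT.1 1) 1
    simp only [Matrix.mul_apply, Fin.sum_univ_two, Matrix.star_apply,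
      Matrix.one_apply_eq, Matrix.one_apply_ne (by decide : (0 : Fin 2) ≠ 1),
      Matrix.one_apply_ne (by decide : (1 : Fin 2) ≠ 0), Complex.star_def]
      at e00 e01 e10 e11
    have hψC : (starRingEnd ℂ) (ψ 0) * ψ 0 + (starRingEnd ℂ) (ψ 1) * ψ 1 = 1 := by
      have h' : ((p1 : ℂ) + (p2 : ℂ)) = 1 := by
        rw [← Complex.ofReal_add, hψ, Complex.ofReal_one]
      rw [hp1, hp2, Complex.sq_norm, Complex.sq_norm,
        ← Complex.mul_conj, ← Complex.mul_conj] at h'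
      linear_combination h'
    have hC : (starRingEnd ℂ) (T.mulVec ψ 0) * T.mulVec ψ 0
        + (starRingEnd ℂ) (T.mulVec ψ 1) * T.mulVec ψ 1 = 1 := by
      simp only [Matrix.mulVec, dotProduct, Fin.sum_univ_two, map_add, map_mul]
      linear_combination ((starRingEnd ℂ) (ψ 0) * ψ 0) * e00
        + ((starRingEnd ℂ) (ψ 0) * ψ 1) * e01
        + ((starRingEnd ℂ) (ψ 1) * ψ 0) * e10
        + ((starRingEnd ℂ) (ψ 1) * ψ 1) * e11 + hψC
    have h'' : ((q1 : ℂ) + (q2 : ℂ)) = 1 := by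
      rw [hq1, hq2, Complex.sq_norm, Complex.sq_norm,
        ← Complex.mul_conj, ← Complex.mul_conj]
      linear_combination hC
    exact_mod_cast h''
  have hp1n : 0 ≤ p1 := by positivity
  have hp2n : 0 ≤ p2 := by positivity
  have hq1n : 0 ≤ q1 := by positivity
  have hq2n : 0 ≤ q2 := by positivity
  set mp : ℝ := max p1 p2 with hmp
  set mq : ℝ := max q1 q2 with hmq
  have hmp0 : 0 < mp := by
    rcases le_total p1 p2 with h | h
    · exact lt_of_lt_of_le (by linarith : (0:ℝ) < p2) (le_max_right _ _)
    · exact lt_of_lt_of_le (by linarith : (0:ℝ) < p1) (le_max_left _ _)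
  have hmq0 : 0 < mq := by
    rcases le_total q1 q2 with h | h
    · exact lt_of_lt_of_le (by linarith : (0:ℝ) < q2) (le_max_right _ _)
    · exact lt_of_lt_of_le (by linarith : (0:ℝ) < q1) (le_max_left _ _)
  -- mp + mq ≤ 1 + c
  have hsum : mp + mq ≤ 1 + c := by
    rcases max_cases p1 p2 with ⟨hP, _⟩ | ⟨hP, _⟩ <;>
      rcases max_cases q1 q2 with ⟨hQ, _⟩ | ⟨hQ, _⟩ <;> rw [hmp, hmq, hP, hQ]
    · exact keyB T hT c hub ψ hψ 0 0
    · exact keyB T hT c hub ψ hψ 0 1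
    · exact keyB T hT c hub ψ hψ 1 0
    · exact keyB T hT c hub ψ hψ 1 1
  -- product bound
  have hprod : mp * mq ≤ ((1 + c) / 2) ^ 2 := by
    nlinarith [sq_nonneg (mp - mq)]
  have hhalf : (0:ℝ) < (1 + c) / 2 := by linarith
  have hlogs : -2 * Real.log ((1 + c) / 2) ≤ -Real.log mp - Real.log mq := by
    have h1 : Real.log (mp * mq) ≤ Real.log (((1 + c) / 2) ^ 2) :=
      Real.log_le_log (by positivity) hprod
    rw [Real.log_mul (ne_of_gt hmp0) (ne_of_gt hmq0), Real.log_pow] at h1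
    push_cast at h1
    linarith
  have H1 := Hren_ge α p1 p2 hα hp1n hp2n hψ
  have H2 := Hren_ge β q1 q2 hβ hq1n hq2n hq
  rw [← hmp] at H1
  rw [← hmq] at H2
  linarith
end
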